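/- Let A be an m-order n-dimensional real tensor with nonzero diagonal entries and define α_i(A) = β_i(A) if a_{i...i} > 0 and α_i(A) = γ_i(A) if a_{i...i} < 0. Then A is a double B̄-tensor if and only if for all i: (a) |a_{i...i}| > |α_i(A)|, (b) |a_{i...i} − α_i(A)| ≥ Σ_{(i_2,...,i_m)≠(i,...,i)} |α_i(A) − a_{i i_2...i_m}|, and (c) for all i ≠ j: |a_{i...i} − α_i(A)|·|a_{j...j} − α_j(A)| > (Σ_{(i_2,...,i_m)≠(i,...,i)} |α_i(A) − a_{i i_2...i_m}|)·(Σ_{(i_2,...,i_m)≠(j,...,j)} |α_j(A) − a_{j i_2...i_m}|). -/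
import Mathlib


open Finset

section TensorDefs

variable {ι : Type*} [Fintype ι] [DecidableEq ι] {k : ℕ}

/-- diagonal entry `a_{i…i}` of an `(k+1)`-order tensor given by its row slices -/
def diagT (A : ι → (Fin k → ι) → ℝ) (i : ι) : ℝ := A i (fun _ => i)

/-- the off-diagonal multi-indices of row `i` -/
def offT (k : ℕ) (i : ι) : Finset (Fin k → ι) :=
  Finset.univ.filter (fun t => t ≠ (fun _ => i))

/-- the multi-indices different from `(i,…,i)` and `(j,…,j)` -/
def offT2 (k : ℕ) (i j : ι) : Finset (Fin k → ι) :=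
  Finset.univ.filter (fun t => t ≠ (fun _ => i) ∧ t ≠ (fun _ => j))

/-- `r_i(A)` -/
def rT (A : ι → (Fin k → ι) → ℝ) (i : ι) : ℝ := ∑ t ∈ offT k i, |A i t|

/-- `r_j^i(A)` -/
def rT2 (A : ι → (Fin k → ι) → ℝ) (j i : ι) : ℝ := ∑ t ∈ offT2 k i j, |A j t|

/-- `β_i(A) = max{0, off-diagonal entries of row i}` -/
noncomputable def betaT (A : ι → (Fin k → ι) → ℝ) (i : ι) : ℝ :=
  (insert (0:ℝ) ((offT k i).image (A i))).max' (Finset.insert_nonempty _ _)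

/-- `γ_i(A) = min{0, off-diagonal entries of row i}` -/
noncomputable def gammaT (A : ι → (Fin k → ι) → ℝ) (i : ι) : ℝ :=
  (insert (0:ℝ) ((offT k i).image (A i))).min' (Finset.insert_nonempty _ _)

/-- `Δ_i(A)` -/
noncomputable def deltaT (A : ι → (Fin k → ι) → ℝ) (i : ι) : ℝ :=
  ∑ t ∈ offT k i, (betaT A i - A i t)

/-- `Θ_i(A)` -/
noncomputable def thetaT (A : ι → (Fin k → ι) → ℝ) (i : ι) : ℝ :=
  ∑ t ∈ offT k i, (A i t - gammaT A i)

/-- `Δ_j^i(A)` -/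
noncomputable def deltaT2 (A : ι → (Fin k → ι) → ℝ) (j i : ι) : ℝ :=
  ∑ t ∈ offT2 k i j, (betaT A j - A j t)

/-- `Θ_j^i(A)` -/
noncomputable def thetaT2 (A : ι → (Fin k → ι) → ℝ) (j i : ι) : ℝ :=
  ∑ t ∈ offT2 k i j, (A j t - gammaT A j)

/-- `Ā`: the `k`-th row tensor of `A` multiplied by `sign(a_{k…k})` -/
noncomputable def barT (A : ι → (Fin k → ι) → ℝ) : ι → (Fin k → ι) → ℝ :=
  fun i t => Real.sign (diagT A i) * A i t

/-- double `B`-tensor -/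
def DoubleB (A : ι → (Fin k → ι) → ℝ) : Prop :=
  (∀ i, betaT A i < diagT A i) ∧
  (∀ i, deltaT A i ≤ diagT A i - betaT A i) ∧
  (∀ i j, i ≠ j → deltaT A i * deltaT A j <
    (diagT A i - betaT A i) * (diagT A j - betaT A j))

/-- quasi-double `B`-tensor -/
def QuasiDoubleB (A : ι → (Fin k → ι) → ℝ) : Prop :=
  (∀ i, betaT A i < diagT A i) ∧
  ∀ i j, i ≠ j → (betaT A i - A j (fun _ => i)) * deltaT A j <
    (diagT A i - betaT A i) * (diagT A j - betaT A j - deltaT2 A j i)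

/-- symmetric tensor of order `k+1` (row form) -/
def SymT (A : ι → (Fin k → ι) → ℝ) : Prop :=
  ∀ σ : Equiv.Perm (Fin (k+1)), ∀ t : Fin (k+1) → ι,
    A ((t ∘ σ) 0) (Fin.tail (t ∘ σ)) = A (t 0) (Fin.tail t)

end TensorDefs

/-- `α_i(A)`: `β_i(A)` if the diagonal entry is positive, `γ_i(A)` if it is negative. -/
noncomputable def alphaT {ι : Type*} [Fintype ι] [DecidableEq ι] {k : ℕ}
    (A : ι → (Fin k → ι) → ℝ) (i : ι) : ℝ :=
  if 0 < diagT A i then betaT A i else gammaT A i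

section Aux

variable {ι : Type*} [Fintype ι] [DecidableEq ι] {k : ℕ}

lemma betaT_nonneg (A : ι → (Fin k → ι) → ℝ) (i : ι) : 0 ≤ betaT A i :=
  Finset.le_max' _ _ (Finset.mem_insert_self _ _)

lemma gammaT_nonpos (A : ι → (Fin k → ι) → ℝ) (i : ι) : gammaT A i ≤ 0 :=
  Finset.min'_le _ _ (Finset.mem_insert_self _ _)

lemma le_betaT (A : ι → (Fin k → ι) → ℝ) (i : ι) {t : Fin k → ι} (ht : t ∈ offT k i) :
    A i t ≤ betaT A i :=
  Finset.le_max' _ _ (Finset.mem_insert_of_mem (Finset.mem_image_of_mem _ ht))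

lemma gammaT_le (A : ι → (Fin k → ι) → ℝ) (i : ι) {t : Fin k → ι} (ht : t ∈ offT k i) :
    gammaT A i ≤ A i t :=
  Finset.min'_le _ _ (Finset.mem_insert_of_mem (Finset.mem_image_of_mem _ ht))

lemma sign_mul_self' (x : ℝ) : Real.sign x * x = |x| := by
  rcases lt_trichotomy x 0 with h | h | h
  · rw [Real.sign_of_neg h, abs_of_neg h]; ring
  · simp [h]
  · rw [Real.sign_of_pos h, abs_of_pos h]; ring

lemma diag_bar (A : ι → (Fin k → ι) → ℝ) (i : ι) :
    diagT (barT A) i = |diagT A i| := by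
  show Real.sign (diagT A i) * A i (fun _ => i) = _
  exact sign_mul_self' _

lemma bar_row_pos (A : ι → (Fin k → ι) → ℝ) {i : ι} (h : 0 < diagT A i) :
    barT A i = A i := by
  funext t; simp [barT, Real.sign_of_pos h]

lemma bar_row_neg (A : ι → (Fin k → ι) → ℝ) {i : ι} (h : diagT A i < 0) (t : Fin k → ι) :
    barT A i t = -A i t := by
  simp [barT, Real.sign_of_neg h]

lemma beta_bar (A : ι → (Fin k → ι) → ℝ) {i : ι} (hd : diagT A i ≠ 0) :
    betaT (barT A) i = |alphaT A i| := by
  by_cases h : 0 < diagT A i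
  · have hb : betaT (barT A) i = betaT A i := by
      simp only [betaT, bar_row_pos A h]
    rw [hb, alphaT, if_pos h, abs_of_nonneg (betaT_nonneg A i)]
  · have h' : diagT A i < 0 := lt_of_le_of_ne (not_lt.1 h) hd
    rw [alphaT, if_neg h, abs_of_nonpos (gammaT_nonpos A i)]
    apply le_antisymm
    · apply Finset.max'_le
      intro y hy
      rcases Finset.mem_insert.1 hy with rfl | hy
      · linarith [gammaT_nonpos A i]
      · obtain ⟨t, ht, rfl⟩ := Finset.mem_image.1 hy
        rw [bar_row_neg A h']
        have := gammaT_le A i ht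
        linarith
    · apply Finset.le_max'
      have hm : gammaT A i ∈ insert (0:ℝ) ((offT k i).image (A i)) :=
        Finset.min'_mem _ _
      rcases Finset.mem_insert.1 hm with h0 | hmem
      · rw [h0, neg_zero]; exact Finset.mem_insert_self _ _
      · obtain ⟨t, ht, hAt⟩ := Finset.mem_image.1 hmem
        have : -gammaT A i = barT A i t := by rw [bar_row_neg A h', hAt]
        rw [this]
        exact Finset.mem_insert_of_mem (Finset.mem_image_of_mem _ ht)

lemma delta_bar (A : ι → (Fin k → ι) → ℝ) {i : ι} (hd : diagT A i ≠ 0) :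
    deltaT (barT A) i = ∑ t ∈ offT k i, |alphaT A i - A i t| := by
  unfold deltaT
  apply Finset.sum_congr rfl
  intro t ht
  rw [beta_bar A hd]
  by_cases h : 0 < diagT A i
  · rw [alphaT, if_pos h, abs_of_nonneg (betaT_nonneg A i), bar_row_pos A h,
      abs_of_nonneg (sub_nonneg.2 (le_betaT A i ht))]
  · have h' : diagT A i < 0 := lt_of_le_of_ne (not_lt.1 h) hd
    rw [alphaT, if_neg h, abs_of_nonpos (gammaT_nonpos A i), bar_row_neg A h',
      abs_of_nonpos (by linarith [gammaT_le A i ht])]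
    ring

lemma abs_sub_alpha (A : ι → (Fin k → ι) → ℝ) {i : ι} (hd : diagT A i ≠ 0)
    (ha : |alphaT A i| < |diagT A i|) :
    |diagT A i - alphaT A i| = |diagT A i| - |alphaT A i| := by
  by_cases h : 0 < diagT A i
  · rw [alphaT, if_pos h] at *
    rw [abs_of_nonneg (betaT_nonneg A i)] at *
    rw [abs_of_pos h] at *
    rw [abs_of_pos (by linarith)]
  · have h' : diagT A i < 0 := lt_of_le_of_ne (not_lt.1 h) hd
    rw [alphaT, if_neg h] at *
    rw [abs_of_nonpos (gammaT_nonpos A i)] at *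
    rw [abs_of_neg h'] at *
    rw [abs_of_neg (by linarith)]
    ring

end Aux

/-- Characterization of double `B̄`-tensors. -/
theorem stmt14 {n k : ℕ} (A : Fin n → (Fin k → Fin n) → ℝ)
    (hd : ∀ i, diagT A i ≠ 0) :
    DoubleB (barT A) ↔
      ((∀ i, |alphaT A i| < |diagT A i|) ∧
       (∀ i, (∑ t ∈ offT k i, |alphaT A i - A i t|) ≤ |diagT A i - alphaT A i|) ∧
       (∀ i j, i ≠ j →
         (∑ t ∈ offT k i, |alphaT A i - A i t|) * (∑ t ∈ offT k j, |alphaT A j - A j t|) <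
           |diagT A i - alphaT A i| * |diagT A j - alphaT A j|)) := by
  constructor
  · rintro ⟨h1, h2, h3⟩
    have ha : ∀ i, |alphaT A i| < |diagT A i| := fun i => by
      rw [← beta_bar A (hd i), ← diag_bar A i]; exact h1 i
    refine ⟨ha, fun i => ?_, fun i j hij => ?_⟩
    · rw [abs_sub_alpha A (hd i) (ha i), ← beta_bar A (hd i), ← diag_bar A i,
        ← delta_bar A (hd i)]
      exact h2 i
    · rw [abs_sub_alpha A (hd i) (ha i), abs_sub_alpha A (hd j) (ha j),
        ← beta_bar A (hd i), ← diag_bar A i, ← delta_bar A (hd i),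
        ← beta_bar A (hd j), ← diag_bar A j, ← delta_bar A (hd j)]
      exact h3 i j hij
  · rintro ⟨ha, h2, h3⟩
    refine ⟨fun i => ?_, fun i => ?_, fun i j hij => ?_⟩
    · rw [beta_bar A (hd i), diag_bar A i]; exact ha i
    · rw [beta_bar A (hd i), diag_bar A i, delta_bar A (hd i),
        ← abs_sub_alpha A (hd i) (ha i)]
      exact h2 i
    · rw [beta_bar A (hd i), diag_bar A i, delta_bar A (hd i),
        beta_bar A (hd j), diag_bar A j, delta_bar A (hd j),
        ← abs_sub_alpha A (hd i) (ha i), ← abs_sub_alpha A (hd j) (ha j)]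
      exact h3 i j hij
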